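/- For any persistence diagrams D₁, D₂, D₃ and any real number p ≥ 1, the p-Wasserstein distance satisfies the triangle inequality: W_p(D₁, D₃) ≤ W_p(D₁, D₂) + W_p(D₂, D₃). Hence W_p is a pseudometric on the set of persistence diagrams. -/

import Mathlib

open scoped BigOperators

/-- A persistence diagram: a finite multiset of points `(b, d)` in `ℝ²` with `b ≤ d`. -/
def IsPersistenceDiagram (D : Multiset (ℝ × ℝ)) : Prop :=
  ∀ q ∈ D, q.1 ≤ q.2

/-- `M` is a partial matching between the diagrams `D₁` and `D₂`: a (multi)subset of
`D₁ × D₂` in which each point of `D₁` appears in at most one pair and each point of `D₂`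
appears in at most one pair. -/
def IsPartialMatching (D₁ D₂ : Multiset (ℝ × ℝ))
    (M : Multiset ((ℝ × ℝ) × (ℝ × ℝ))) : Prop :=
  M.map Prod.fst ≤ D₁ ∧ M.map Prod.snd ≤ D₂

/-- `‖q₁ - q₂‖_p ^ p` for the `ℓ^p` norm on `ℝ²`. -/
noncomputable def lpCostP (p : ℝ) (q₁ q₂ : ℝ × ℝ) : ℝ :=
  |q₁.1 - q₂.1| ^ p + |q₁.2 - q₂.2| ^ p

/-- Orthogonal projection of a point of `ℝ²` onto the diagonal `Δ = {(x, x) : x ∈ ℝ}`. -/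
noncomputable def diagProj (q : ℝ × ℝ) : ℝ × ℝ :=
  ((q.1 + q.2) / 2, (q.1 + q.2) / 2)

/-- The transportation cost `c_p(M)` of a partial matching `M` between `D₁` and `D₂`:
`( Σ_{(q₁,q₂)∈M} ‖q₁ − q₂‖_p^p + Σ_{q unmatched} ‖q − π(q)‖_p^p )^{1/p}`. -/
noncomputable def transportCost (p : ℝ) (D₁ D₂ : Multiset (ℝ × ℝ))
    (M : Multiset ((ℝ × ℝ) × (ℝ × ℝ))) : ℝ :=
  ((M.map fun q => lpCostP p q.1 q.2).sum
      + ((D₁ - M.map Prod.fst).map fun q => lpCostP p q (diagProj q)).sum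
      + ((D₂ - M.map Prod.snd).map fun q => lpCostP p q (diagProj q)).sum) ^ (1 / p)

/-- The `p`-Wasserstein distance between persistence diagrams:
`W_p(D₁, D₂) = inf_M c_p(M)` over all partial matchings `M` between `D₁` and `D₂`. -/
noncomputable def wassersteinDist (p : ℝ) (D₁ D₂ : Multiset (ℝ × ℝ)) : ℝ :=
  sInf {c : ℝ | ∃ M, IsPartialMatching D₁ D₂ M ∧ c = transportCost p D₁ D₂ M}

lemma lpCostP_nonneg (p : ℝ) (a b : ℝ × ℝ) : 0 ≤ lpCostP p a b :=
  add_nonneg (Real.rpow_nonneg (abs_nonneg _) _) (Real.rpow_nonneg (abs_nonneg _) _)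

lemma ell_pow {p : ℝ} (hp : 1 ≤ p) (a b : ℝ × ℝ) :
    ((lpCostP p a b) ^ (1/p)) ^ p = lpCostP p a b := by
  have hp0 : p ≠ 0 := by positivity
  rw [← Real.rpow_mul (lpCostP_nonneg p a b), one_div, inv_mul_cancel₀ hp0, Real.rpow_one]

lemma lpCostP_comm (p : ℝ) (a b : ℝ × ℝ) : lpCostP p a b = lpCostP p b a := by
  simp [lpCostP, abs_sub_comm]

lemma ell_triangle {p : ℝ} (hp : 1 ≤ p) (a b c : ℝ × ℝ) :
    (lpCostP p a c) ^ (1/p) ≤ (lpCostP p a b) ^ (1/p) + (lpCostP p b c) ^ (1/p) := by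
  have h := Real.Lp_add_le (Finset.univ : Finset (Fin 2))
    ![a.1 - b.1, a.2 - b.2] ![b.1 - c.1, b.2 - c.2] hp
  simp only [Fin.sum_univ_two, Matrix.cons_val_zero, Matrix.cons_val_one, Matrix.head_cons] at h
  rw [sub_add_sub_cancel, sub_add_sub_cancel] at h
  simpa [lpCostP] using h

lemma proj_min {p : ℝ} (hp : 1 ≤ p) (q : ℝ × ℝ) (x : ℝ) :
    lpCostP p q (diagProj q) ≤ lpCostP p q (x, x) := by
  set a := |q.1 - x| with ha
  set b := |q.2 - x| with hb
  have ha0 : 0 ≤ a := abs_nonneg _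
  have hb0 : 0 ≤ b := abs_nonneg _
  have hd : |q.1 - q.2| ≤ a + b := by
    calc |q.1 - q.2| ≤ |q.1 - x| + |x - q.2| := abs_sub_le _ _ _
    _ = a + b := by rw [abs_sub_comm x q.2]
  have hL : lpCostP p q (diagProj q) = 2 * (|q.1 - q.2| / 2) ^ p := by
    have h1 : q.1 - (q.1 + q.2) / 2 = (q.1 - q.2) / 2 := by ring
    have h2 : q.2 - (q.1 + q.2) / 2 = -((q.1 - q.2) / 2) := by ring
    simp [lpCostP, diagProj, h1, h2, abs_div, abs_neg]
    ring
  have hconv := (convexOn_rpow hp).2 (Set.mem_Ici.2 ha0) (Set.mem_Ici.2 hb0)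
    (by norm_num : (0:ℝ) ≤ 1/2) (by norm_num : (0:ℝ) ≤ 1/2) (by norm_num)
  simp only [smul_eq_mul] at hconv
  have hmono : (|q.1 - q.2| / 2) ^ p ≤ ((a + b) / 2) ^ p :=
    Real.rpow_le_rpow (by positivity) (by linarith) (by linarith)
  have he : 1/2 * a + 1/2 * b = (a + b) / 2 := by ring
  rw [he] at hconv
  have : lpCostP p q (x, x) = a ^ p + b ^ p := by simp [lpCostP, ha, hb]
  rw [hL, this]
  nlinarith [hconv, hmono]

lemma ell_proj_le {p : ℝ} (hp : 1 ≤ p) (q r : ℝ × ℝ) :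
    (lpCostP p q (diagProj q)) ^ (1/p) ≤
      (lpCostP p q r) ^ (1/p) + (lpCostP p r (diagProj r)) ^ (1/p) := by
  have h1 : (lpCostP p q (diagProj q)) ^ (1/p) ≤ (lpCostP p q (diagProj r)) ^ (1/p) := by
    apply Real.rpow_le_rpow (lpCostP_nonneg _ _ _) _ (by positivity)
    exact proj_min hp q ((r.1 + r.2)/2)
  exact le_trans h1 (ell_triangle hp q r (diagProj r))

lemma multiset_Lp {p : ℝ} (hp : 1 ≤ p) (Z : Multiset (ℝ × ℝ))
    (hZ : ∀ z ∈ Z, 0 ≤ z.1 ∧ 0 ≤ z.2) :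
    ((Z.map fun z => (z.1 + z.2) ^ p).sum) ^ (1/p) ≤
      ((Z.map fun z => z.1 ^ p).sum) ^ (1/p) + ((Z.map fun z => z.2 ^ p).sum) ^ (1/p) := by
  obtain ⟨l, rfl⟩ : ∃ l : List (ℝ × ℝ), (↑l : Multiset (ℝ × ℝ)) = Z :=
    ⟨Z.toList, Multiset.coe_toList Z⟩
  have e : ∀ f : ℝ × ℝ → ℝ,
      ((↑l : Multiset (ℝ × ℝ)).map f).sum = ∑ i : Fin l.length, f (l.get i) := by
    intro f
    rw [← Fin.sum_ofFn,
      show (List.ofFn fun i => f (l.get i)) = l.map f from List.ofFn_getElem_eq_map l f]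
    simp
  rw [e, e, e]
  refine Real.Lp_add_le_of_nonneg (f := fun i => (l.get i).1) (g := fun i => (l.get i).2)
    Finset.univ hp (fun i _ => ?_) (fun i _ => ?_)
  · exact (hZ _ (by simp [List.get_mem])).1
  · exact (hZ _ (by simp [List.get_mem])).2

lemma sum_map_nonneg {α : Type*} (S : Multiset α) (f : α → ℝ) (hf : ∀ a, 0 ≤ f a) :
    0 ≤ (S.map f).sum :=
  Multiset.sum_nonneg fun x hx => by
    obtain ⟨a, _, rfl⟩ := Multiset.mem_map.mp hx; exact hf a

lemma sum_map_le_of_le {α : Type*} {S S' : Multiset α} (h : S ≤ S') (f : α → ℝ)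
    (hf : ∀ a, 0 ≤ f a) : (S.map f).sum ≤ (S'.map f).sum := by
  obtain ⟨u, rfl⟩ := Multiset.le_iff_exists_add.mp h
  rw [Multiset.map_add, Multiset.sum_add]
  exact le_add_of_nonneg_right (sum_map_nonneg u f hf)

lemma map_sub_of_le {α β : Type*} [DecidableEq α] [DecidableEq β] {A B : Multiset α} (h : A ≤ B)
    (f : α → β) : (B - A).map f = B.map f - A.map f := by
  obtain ⟨u, rfl⟩ := Multiset.le_iff_exists_add.mp h
  simp [Multiset.map_add]

lemma sub_split {α : Type*} [DecidableEq α] {A B C : Multiset α} (h1 : C ≤ B) (h2 : B ≤ A) :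
    A - C = (A - B) + (B - C) := by
  ext x
  have k1 := Multiset.le_iff_count.mp h1 x
  have k2 := Multiset.le_iff_count.mp h2 x
  simp only [Multiset.count_sub, Multiset.count_add]
  omega

lemma sub_inter {α : Type*} [DecidableEq α] (A B : Multiset α) : A - A ∩ B = A - B := by
  ext x; simp only [Multiset.count_sub, Multiset.count_inter]; omega

lemma exists_T (M N : Multiset ((ℝ × ℝ) × (ℝ × ℝ))) :
    ∃ T : Multiset ((ℝ × ℝ) × (ℝ × ℝ) × (ℝ × ℝ)),
      T.map (fun t => (t.1, t.2.1)) ≤ M ∧ T.map Prod.snd ≤ N ∧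
        T.map (fun t => t.2.1) = M.map Prod.snd ∩ N.map Prod.fst := by
  classical
  induction M using Multiset.induction_on generalizing N with
  | empty => exact ⟨0, by simp, by simp, by simp⟩
  | cons a M' IH =>
    by_cases hb : a.2 ∈ N.map Prod.fst
    · rw [Multiset.mem_map] at hb
      obtain ⟨n, hnN, hn1⟩ := hb
      obtain ⟨T, h12, h23, hmid⟩ := IH (N.erase n)
      refine ⟨(a.1, a.2, n.2) ::ₘ T, ?_, ?_, ?_⟩
      · rw [Multiset.map_cons]
        exact Multiset.cons_le_cons _ h12
      · rw [Multiset.map_cons]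
        have hn : ((a.1, a.2, n.2) : (ℝ × ℝ) × (ℝ × ℝ) × (ℝ × ℝ)).2 = n := by
          simp only []; rw [← hn1]
        rw [hn]
        calc n ::ₘ T.map Prod.snd ≤ n ::ₘ N.erase n := Multiset.cons_le_cons _ h23
        _ = N := Multiset.cons_erase hnN
      · rw [Multiset.map_cons, Multiset.map_cons, hmid]
        have herase : (N.erase n).map Prod.fst = (N.map Prod.fst).erase a.2 := by
          conv_rhs => rw [← Multiset.cons_erase hnN]
          rw [Multiset.map_cons, hn1, Multiset.erase_cons_head]
        rw [herase]
        have hcnt : 1 ≤ (N.map Prod.fst).count a.2 :=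
          Multiset.one_le_count_iff_mem.mpr (Multiset.mem_map.mpr ⟨n, hnN, hn1⟩)
        ext x
        by_cases hx : x = a.2
        · subst hx
          simp only [Multiset.count_inter, Multiset.count_cons_self, Multiset.count_erase_self]
          omega
        · simp only [Multiset.count_inter, Multiset.count_cons_of_ne hx,
            Multiset.count_erase_of_ne hx]
    · obtain ⟨T, h12, h23, hmid⟩ := IH N
      refine ⟨T, le_trans h12 (Multiset.le_cons_self _ _), h23, ?_⟩
      rw [hmid, Multiset.map_cons]
      have hcnt : (N.map Prod.fst).count a.2 = 0 := Multiset.count_eq_zero.mpr hb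
      ext x
      by_cases hx : x = a.2
      · subst hx
        simp only [Multiset.count_inter, Multiset.count_cons_self, hcnt]
        omega
      · simp only [Multiset.count_inter, Multiset.count_cons_of_ne hx]

lemma compose_cost {p : ℝ} (hp : 1 ≤ p) (D₁ D₂ D₃ : Multiset (ℝ × ℝ))
    {M N : Multiset ((ℝ × ℝ) × (ℝ × ℝ))}
    (hM : IsPartialMatching D₁ D₂ M) (hN : IsPartialMatching D₂ D₃ N) :
    ∃ K, IsPartialMatching D₁ D₃ K ∧
      transportCost p D₁ D₃ K ≤ transportCost p D₁ D₂ M + transportCost p D₂ D₃ N := by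
  classical
  have hp0 : (0:ℝ) < p := lt_of_lt_of_le one_pos hp
  have hip : (0:ℝ) ≤ 1/p := by positivity
  have hln : ∀ a b : ℝ × ℝ, 0 ≤ (lpCostP p a b) ^ (1/p) :=
    fun a b => Real.rpow_nonneg (lpCostP_nonneg _ _ _) _
  obtain ⟨T, hT12, hT23, hTmid⟩ := exists_T M N
  set K : Multiset ((ℝ × ℝ) × (ℝ × ℝ)) := T.map (fun t => (t.1, t.2.2)) with hKdef
  set Mr : Multiset ((ℝ × ℝ) × (ℝ × ℝ)) := M - T.map (fun t => (t.1, t.2.1)) with hMrdef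
  set Nr : Multiset ((ℝ × ℝ) × (ℝ × ℝ)) := N - T.map Prod.snd with hNrdef
  -- basic map identities
  have hKf : K.map Prod.fst = (T.map (fun t => (t.1, t.2.1))).map Prod.fst := by
    rw [hKdef, Multiset.map_map, Multiset.map_map]
    exact Multiset.map_congr rfl fun t _ => rfl
  have hKs : K.map Prod.snd = (T.map Prod.snd).map Prod.snd := by
    rw [hKdef, Multiset.map_map, Multiset.map_map]
    exact Multiset.map_congr rfl fun t _ => rfl
  have hKfle : K.map Prod.fst ≤ M.map Prod.fst := by
    rw [hKf]; exact Multiset.map_le_map hT12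
  have hKsle : K.map Prod.snd ≤ N.map Prod.snd := by
    rw [hKs]; exact Multiset.map_le_map hT23
  have hKmatch : IsPartialMatching D₁ D₃ K :=
    ⟨le_trans hKfle hM.1, le_trans hKsle hN.2⟩
  refine ⟨K, hKmatch, ?_⟩
  -- middle multiset identities
  have hmid12 : (T.map (fun t => (t.1, t.2.1))).map Prod.snd = T.map (fun t => t.2.1) := by
    rw [Multiset.map_map]
    exact Multiset.map_congr rfl fun t _ => rfl
  have hmid23 : (T.map Prod.snd).map Prod.fst = T.map (fun t => t.2.1) := by
    rw [Multiset.map_map]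
    exact Multiset.map_congr rfl fun t _ => rfl
  have hMrs : Mr.map Prod.snd = M.map Prod.snd - N.map Prod.fst := by
    rw [hMrdef, map_sub_of_le hT12, hmid12, hTmid, sub_inter]
  have hMrsle : Mr.map Prod.snd ≤ D₂ - N.map Prod.fst := by
    rw [hMrs]; exact tsub_le_tsub_right hM.2 _
  have hNrf : Nr.map Prod.fst = N.map Prod.fst - M.map Prod.snd := by
    rw [hNrdef, map_sub_of_le hT23, hmid23, hTmid, Multiset.inter_comm, sub_inter]
  have hNrfle : Nr.map Prod.fst ≤ D₂ - M.map Prod.snd := by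
    rw [hNrf]; exact tsub_le_tsub_right hN.1 _
  -- unmatched decompositions
  have hU1 : D₁ - K.map Prod.fst = (D₁ - M.map Prod.fst) + Mr.map Prod.fst := by
    rw [sub_split hKfle hM.1, hKf, ← map_sub_of_le hT12, ← hMrdef]
  have hU3 : D₃ - K.map Prod.snd = (D₃ - N.map Prod.snd) + Nr.map Prod.snd := by
    rw [sub_split hKsle hN.2, hKs, ← map_sub_of_le hT23, ← hNrdef]
  -- the splittings of M and N
  have hMsplit : Mr + T.map (fun t => (t.1, t.2.1)) = M := tsub_add_cancel_of_le hT12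
  have hNsplit : Nr + T.map Prod.snd = N := tsub_add_cancel_of_le hT23
  -- the alignment multiset
  set Z : Multiset (ℝ × ℝ) :=
    T.map (fun t => ((lpCostP p t.1 t.2.1) ^ (1/p), (lpCostP p t.2.1 t.2.2) ^ (1/p)))
    + Mr.map (fun m => ((lpCostP p m.1 m.2) ^ (1/p), (lpCostP p m.2 (diagProj m.2)) ^ (1/p)))
    + Nr.map (fun n => ((lpCostP p n.1 (diagProj n.1)) ^ (1/p), (lpCostP p n.1 n.2) ^ (1/p)))
    + (D₁ - M.map Prod.fst).map (fun q => ((lpCostP p q (diagProj q)) ^ (1/p), 0))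
    + (D₃ - N.map Prod.snd).map (fun q => (0, (lpCostP p q (diagProj q)) ^ (1/p))) with hZdef
  have hZpos : ∀ z ∈ Z, 0 ≤ z.1 ∧ 0 ≤ z.2 := by
    intro z hz
    rw [hZdef] at hz
    simp only [Multiset.mem_add, Multiset.mem_map] at hz
    rcases hz with ((((⟨t, _, rfl⟩ | ⟨m, _, rfl⟩) | ⟨n, _, rfl⟩) | ⟨q, _, rfl⟩) | ⟨q, _, rfl⟩) <;>
      exact ⟨by first | exact hln _ _ | exact le_rfl, by first | exact hln _ _ | exact le_rfl⟩
  have eZ : ∀ f : (ℝ × ℝ) → ℝ, (Z.map f).sum =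
      (T.map (fun t => f ((lpCostP p t.1 t.2.1) ^ (1/p), (lpCostP p t.2.1 t.2.2) ^ (1/p)))).sum
      + (Mr.map (fun m => f ((lpCostP p m.1 m.2) ^ (1/p),
          (lpCostP p m.2 (diagProj m.2)) ^ (1/p)))).sum
      + (Nr.map (fun n => f ((lpCostP p n.1 (diagProj n.1)) ^ (1/p),
          (lpCostP p n.1 n.2) ^ (1/p)))).sum
      + ((D₁ - M.map Prod.fst).map (fun q => f ((lpCostP p q (diagProj q)) ^ (1/p), 0))).sum
      + ((D₃ - N.map Prod.snd).map (fun q => f (0, (lpCostP p q (diagProj q)) ^ (1/p)))).sum := by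
    intro f
    rw [hZdef]
    simp only [Multiset.map_add, Multiset.sum_add, Multiset.map_map, Function.comp]
  -- abbreviations
  set g : (ℝ × ℝ) → ℝ := fun q => lpCostP p q (diagProj q) with hgdef
  set c : (ℝ × ℝ) × (ℝ × ℝ) → ℝ := fun q => lpCostP p q.1 q.2 with hcdef
  have hgn : ∀ q, 0 ≤ g q := fun q => lpCostP_nonneg _ _ _
  have hcn : ∀ q, 0 ≤ c q := fun q => lpCostP_nonneg _ _ _
  -- key1 : LHS inner sum ≤ (Z.map fun z => (z.1+z.2)^p).sum
  have key1 : (K.map c).sum + ((D₁ - K.map Prod.fst).map g).sum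
      + ((D₃ - K.map Prod.snd).map g).sum ≤ (Z.map fun z => (z.1 + z.2) ^ p).sum := by
    rw [eZ]
    have eK : (K.map c).sum = (T.map (fun t => c (t.1, t.2.2))).sum := by
      rw [hKdef, Multiset.map_map, Function.comp_def]
    have e1 : ((D₁ - K.map Prod.fst).map g).sum
        = ((D₁ - M.map Prod.fst).map g).sum + (Mr.map (fun m => g m.1)).sum := by
      rw [hU1, Multiset.map_add, Multiset.sum_add, Multiset.map_map, Function.comp_def]
    have e3 : ((D₃ - K.map Prod.snd).map g).sum
        = ((D₃ - N.map Prod.snd).map g).sum + (Nr.map (fun n => g n.2)).sum := by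
      rw [hU3, Multiset.map_add, Multiset.sum_add, Multiset.map_map, Function.comp_def]
    rw [eK, e1, e3]
    have hT : (T.map (fun t => c (t.1, t.2.2))).sum ≤
        (T.map (fun t => (fun z : ℝ × ℝ => (z.1 + z.2) ^ p)
          ((lpCostP p t.1 t.2.1) ^ (1/p), (lpCostP p t.2.1 t.2.2) ^ (1/p)))).sum := by
      refine Multiset.sum_map_le_sum_map _ _ (fun t _ => ?_)
      calc c (t.1, t.2.2) = ((lpCostP p t.1 t.2.2) ^ (1/p)) ^ p := (ell_pow hp _ _).symm
      _ ≤ _ := Real.rpow_le_rpow (hln _ _) (ell_triangle hp t.1 t.2.1 t.2.2) (le_of_lt hp0)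
    have hMr : (Mr.map (fun m => g m.1)).sum ≤
        (Mr.map (fun m => (fun z : ℝ × ℝ => (z.1 + z.2) ^ p)
          ((lpCostP p m.1 m.2) ^ (1/p), (lpCostP p m.2 (diagProj m.2)) ^ (1/p)))).sum := by
      refine Multiset.sum_map_le_sum_map _ _ (fun m _ => ?_)
      calc g m.1 = ((lpCostP p m.1 (diagProj m.1)) ^ (1/p)) ^ p := (ell_pow hp _ _).symm
      _ ≤ _ := Real.rpow_le_rpow (hln _ _) (ell_proj_le hp m.1 m.2) (le_of_lt hp0)
    have hNr : (Nr.map (fun n => g n.2)).sum ≤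
        (Nr.map (fun n => (fun z : ℝ × ℝ => (z.1 + z.2) ^ p)
          ((lpCostP p n.1 (diagProj n.1)) ^ (1/p), (lpCostP p n.1 n.2) ^ (1/p)))).sum := by
      refine Multiset.sum_map_le_sum_map _ _ (fun n _ => ?_)
      have htri : (lpCostP p n.2 (diagProj n.2)) ^ (1/p) ≤
          (lpCostP p n.1 (diagProj n.1)) ^ (1/p) + (lpCostP p n.1 n.2) ^ (1/p) := by
        have := ell_proj_le hp n.2 n.1
        rw [lpCostP_comm p n.2 n.1] at this
        linarith
      calc g n.2 = ((lpCostP p n.2 (diagProj n.2)) ^ (1/p)) ^ p := (ell_pow hp _ _).symm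
      _ ≤ _ := Real.rpow_le_rpow (hln _ _) htri (le_of_lt hp0)
    have h1e : ((D₁ - M.map Prod.fst).map g).sum =
        ((D₁ - M.map Prod.fst).map (fun q => (fun z : ℝ × ℝ => (z.1 + z.2) ^ p)
          ((lpCostP p q (diagProj q)) ^ (1/p), (0:ℝ)))).sum := by
      refine congrArg Multiset.sum (Multiset.map_congr rfl (fun q _ => ?_))
      simp only [add_zero]
      exact (ell_pow hp _ _).symm
    have h3e : ((D₃ - N.map Prod.snd).map g).sum =
        ((D₃ - N.map Prod.snd).map (fun q => (fun z : ℝ × ℝ => (z.1 + z.2) ^ p)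
          ((0:ℝ), (lpCostP p q (diagProj q)) ^ (1/p)))).sum := by
      refine congrArg Multiset.sum (Multiset.map_congr rfl (fun q _ => ?_))
      simp only [zero_add]
      exact (ell_pow hp _ _).symm
    rw [h1e] at *
    linarith [hT, hMr, hNr, h1e, h3e]
  -- key2
  have key2 : (Z.map fun z => z.1 ^ p).sum ≤ (M.map c).sum
      + ((D₁ - M.map Prod.fst).map g).sum + ((D₂ - M.map Prod.snd).map g).sum := by
    rw [eZ]
    have eA : (T.map (fun t => (fun z : ℝ × ℝ => z.1 ^ p)
        ((lpCostP p t.1 t.2.1) ^ (1/p), (lpCostP p t.2.1 t.2.2) ^ (1/p)))).sum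
        = (T.map (fun t => lpCostP p t.1 t.2.1)).sum :=
      congrArg Multiset.sum (Multiset.map_congr rfl (fun t _ => ell_pow hp _ _))
    have eB : (Mr.map (fun m => (fun z : ℝ × ℝ => z.1 ^ p)
        ((lpCostP p m.1 m.2) ^ (1/p), (lpCostP p m.2 (diagProj m.2)) ^ (1/p)))).sum
        = (Mr.map c).sum :=
      congrArg Multiset.sum (Multiset.map_congr rfl (fun m _ => ell_pow hp _ _))
    have eC0 : (Nr.map (fun n => (fun z : ℝ × ℝ => z.1 ^ p)
        ((lpCostP p n.1 (diagProj n.1)) ^ (1/p), (lpCostP p n.1 n.2) ^ (1/p)))).sum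
        = (Nr.map (fun n => g n.1)).sum :=
      congrArg Multiset.sum (Multiset.map_congr rfl (fun n _ => ell_pow hp _ _))
    have eC : (Nr.map (fun n => g n.1)).sum ≤ ((D₂ - M.map Prod.snd).map g).sum := by
      have e : Nr.map (fun n => g n.1) = (Nr.map Prod.fst).map g := by
        rw [Multiset.map_map]; exact Multiset.map_congr rfl fun n _ => rfl
      rw [e]; exact sum_map_le_of_le hNrfle g hgn
    have eD : ((D₁ - M.map Prod.fst).map (fun q => (fun z : ℝ × ℝ => z.1 ^ p)
        ((lpCostP p q (diagProj q)) ^ (1/p), (0:ℝ)))).sum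
        = ((D₁ - M.map Prod.fst).map g).sum :=
      congrArg Multiset.sum (Multiset.map_congr rfl (fun q _ => ell_pow hp _ _))
    have eE : ((D₃ - N.map Prod.snd).map (fun q => (fun z : ℝ × ℝ => z.1 ^ p)
        ((0:ℝ), (lpCostP p q (diagProj q)) ^ (1/p)))).sum = 0 := by
      have e : ∀ q ∈ (D₃ - N.map Prod.snd), (fun z : ℝ × ℝ => z.1 ^ p)
          ((0:ℝ), (lpCostP p q (diagProj q)) ^ (1/p)) = 0 :=
        fun q _ => Real.zero_rpow (ne_of_gt hp0)
      rw [Multiset.map_congr rfl e]; simp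
    have eM : (M.map c).sum = (Mr.map c).sum + (T.map (fun t => lpCostP p t.1 t.2.1)).sum := by
      conv_lhs => rw [← hMsplit]
      rw [Multiset.map_add, Multiset.sum_add]
      congr 1
      rw [Multiset.map_map]
      exact congrArg Multiset.sum (Multiset.map_congr rfl fun t _ => rfl)
    rw [eA, eB, eC0, eD, eE, eM]
    linarith [eC]
  -- key3
  have key3 : (Z.map fun z => z.2 ^ p).sum ≤ (N.map c).sum
      + ((D₂ - N.map Prod.fst).map g).sum + ((D₃ - N.map Prod.snd).map g).sum := by
    rw [eZ]
    have eA : (T.map (fun t => (fun z : ℝ × ℝ => z.2 ^ p)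
        ((lpCostP p t.1 t.2.1) ^ (1/p), (lpCostP p t.2.1 t.2.2) ^ (1/p)))).sum
        = (T.map (fun t => lpCostP p t.2.1 t.2.2)).sum :=
      congrArg Multiset.sum (Multiset.map_congr rfl (fun t _ => ell_pow hp _ _))
    have eB0 : (Mr.map (fun m => (fun z : ℝ × ℝ => z.2 ^ p)
        ((lpCostP p m.1 m.2) ^ (1/p), (lpCostP p m.2 (diagProj m.2)) ^ (1/p)))).sum
        = (Mr.map (fun m => g m.2)).sum :=
      congrArg Multiset.sum (Multiset.map_congr rfl (fun m _ => ell_pow hp _ _))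
    have eB : (Mr.map (fun m => g m.2)).sum ≤ ((D₂ - N.map Prod.fst).map g).sum := by
      have e : Mr.map (fun m => g m.2) = (Mr.map Prod.snd).map g := by
        rw [Multiset.map_map]; exact Multiset.map_congr rfl fun m _ => rfl
      rw [e]; exact sum_map_le_of_le hMrsle g hgn
    have eC : (Nr.map (fun n => (fun z : ℝ × ℝ => z.2 ^ p)
        ((lpCostP p n.1 (diagProj n.1)) ^ (1/p), (lpCostP p n.1 n.2) ^ (1/p)))).sum
        = (Nr.map c).sum :=
      congrArg Multiset.sum (Multiset.map_congr rfl (fun n _ => ell_pow hp _ _))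
    have eD : ((D₁ - M.map Prod.fst).map (fun q => (fun z : ℝ × ℝ => z.2 ^ p)
        ((lpCostP p q (diagProj q)) ^ (1/p), (0:ℝ)))).sum = 0 := by
      have e : ∀ q ∈ (D₁ - M.map Prod.fst), (fun z : ℝ × ℝ => z.2 ^ p)
          ((lpCostP p q (diagProj q)) ^ (1/p), (0:ℝ)) = 0 :=
        fun q _ => Real.zero_rpow (ne_of_gt hp0)
      rw [Multiset.map_congr rfl e]; simp
    have eE : ((D₃ - N.map Prod.snd).map (fun q => (fun z : ℝ × ℝ => z.2 ^ p)
        ((0:ℝ), (lpCostP p q (diagProj q)) ^ (1/p)))).sum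
        = ((D₃ - N.map Prod.snd).map g).sum :=
      congrArg Multiset.sum (Multiset.map_congr rfl (fun q _ => ell_pow hp _ _))
    have eN : (N.map c).sum = (Nr.map c).sum + (T.map (fun t => lpCostP p t.2.1 t.2.2)).sum := by
      conv_lhs => rw [← hNsplit]
      rw [Multiset.map_add, Multiset.sum_add]
      congr 1
      rw [Multiset.map_map]
      exact congrArg Multiset.sum (Multiset.map_congr rfl fun t _ => rfl)
    rw [eA, eB0, eC, eD, eE, eN]
    linarith [eB]
  -- final chain
  have hSKn : 0 ≤ (K.map c).sum + ((D₁ - K.map Prod.fst).map g).sum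
      + ((D₃ - K.map Prod.snd).map g).sum :=
    add_nonneg (add_nonneg (sum_map_nonneg _ _ hcn) (sum_map_nonneg _ _ hgn))
      (sum_map_nonneg _ _ hgn)
  have hZ1n : 0 ≤ (Z.map fun z => z.1 ^ p).sum :=
    Multiset.sum_nonneg fun r hr => by
      obtain ⟨z, hz, rfl⟩ := Multiset.mem_map.mp hr
      exact Real.rpow_nonneg (hZpos z hz).1 _
  have hZ2n : 0 ≤ (Z.map fun z => z.2 ^ p).sum :=
    Multiset.sum_nonneg fun r hr => by
      obtain ⟨z, hz, rfl⟩ := Multiset.mem_map.mp hr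
      exact Real.rpow_nonneg (hZpos z hz).2 _
  have final : ((K.map c).sum + ((D₁ - K.map Prod.fst).map g).sum
      + ((D₃ - K.map Prod.snd).map g).sum) ^ (1/p)
      ≤ ((M.map c).sum + ((D₁ - M.map Prod.fst).map g).sum
        + ((D₂ - M.map Prod.snd).map g).sum) ^ (1/p)
      + ((N.map c).sum + ((D₂ - N.map Prod.fst).map g).sum
        + ((D₃ - N.map Prod.snd).map g).sum) ^ (1/p) :=
    calc ((K.map c).sum + ((D₁ - K.map Prod.fst).map g).sum
        + ((D₃ - K.map Prod.snd).map g).sum) ^ (1/p)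
        ≤ ((Z.map fun z => (z.1 + z.2) ^ p).sum) ^ (1/p) :=
          Real.rpow_le_rpow hSKn key1 hip
      _ ≤ ((Z.map fun z => z.1 ^ p).sum) ^ (1/p) + ((Z.map fun z => z.2 ^ p).sum) ^ (1/p) :=
          multiset_Lp hp Z hZpos
      _ ≤ _ := add_le_add (Real.rpow_le_rpow hZ1n key2 hip) (Real.rpow_le_rpow hZ2n key3 hip)
  exact final

lemma transportCost_nonneg (p : ℝ) (D₁ D₂ : Multiset (ℝ × ℝ))
    (M : Multiset ((ℝ × ℝ) × (ℝ × ℝ))) : 0 ≤ transportCost p D₁ D₂ M :=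
  Real.rpow_nonneg
    (add_nonneg (add_nonneg (sum_map_nonneg _ _ fun q => lpCostP_nonneg _ _ _)
      (sum_map_nonneg _ _ fun q => lpCostP_nonneg _ _ _))
      (sum_map_nonneg _ _ fun q => lpCostP_nonneg _ _ _)) _


/-- The `p`-Wasserstein distance satisfies the triangle inequality
`W_p(D₁, D₃) ≤ W_p(D₁, D₂) + W_p(D₂, D₃)`; hence it is a pseudometric on the set of
persistence diagrams. -/
theorem wasserstein_triangle (p : ℝ) (hp : 1 ≤ p)
    (D₁ D₂ D₃ : Multiset (ℝ × ℝ))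
    (h₁ : IsPersistenceDiagram D₁) (h₂ : IsPersistenceDiagram D₂)
    (h₃ : IsPersistenceDiagram D₃) :
    wassersteinDist p D₁ D₃ ≤ wassersteinDist p D₁ D₂ + wassersteinDist p D₂ D₃ := by
  classical
  have hne : ∀ A B : Multiset (ℝ × ℝ), Set.Nonempty
      {c : ℝ | ∃ M, IsPartialMatching A B M ∧ c = transportCost p A B M} := by
    intro A B
    exact ⟨transportCost p A B 0, 0, ⟨by constructor <;> simp, rfl⟩⟩
  have hbdd : ∀ A B : Multiset (ℝ × ℝ), BddBelow
      {c : ℝ | ∃ M, IsPartialMatching A B M ∧ c = transportCost p A B M} := by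
    intro A B
    exact ⟨0, fun x hx => by obtain ⟨M, _, rfl⟩ := hx; exact transportCost_nonneg p A B M⟩
  unfold wassersteinDist
  have key : ∀ c₁ ∈ {c : ℝ | ∃ M, IsPartialMatching D₁ D₂ M ∧ c = transportCost p D₁ D₂ M},
      ∀ c₂ ∈ {c : ℝ | ∃ M, IsPartialMatching D₂ D₃ M ∧ c = transportCost p D₂ D₃ M},
      sInf {c : ℝ | ∃ M, IsPartialMatching D₁ D₃ M ∧ c = transportCost p D₁ D₃ M} ≤ c₁ + c₂ := by
    rintro c₁ ⟨M, hM, rfl⟩ c₂ ⟨N, hN, rfl⟩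
    obtain ⟨K, hK, hle⟩ := compose_cost hp D₁ D₂ D₃ hM hN
    exact le_trans (csInf_le (hbdd _ _) ⟨K, hK, rfl⟩) hle
  have h2 : ∀ c₂ ∈ {c : ℝ | ∃ M, IsPartialMatching D₂ D₃ M ∧ c = transportCost p D₂ D₃ M},
      sInf {c : ℝ | ∃ M, IsPartialMatching D₁ D₃ M ∧ c = transportCost p D₁ D₃ M} - c₂
        ≤ sInf {c : ℝ | ∃ M, IsPartialMatching D₁ D₂ M ∧ c = transportCost p D₁ D₂ M} :=
    fun c₂ hc₂ => le_csInf (hne _ _) fun c₁ hc₁ => by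
      have := key c₁ hc₁ c₂ hc₂; linarith
  have h3 : sInf {c : ℝ | ∃ M, IsPartialMatching D₁ D₃ M ∧ c = transportCost p D₁ D₃ M}
      - sInf {c : ℝ | ∃ M, IsPartialMatching D₁ D₂ M ∧ c = transportCost p D₁ D₂ M}
      ≤ sInf {c : ℝ | ∃ M, IsPartialMatching D₂ D₃ M ∧ c = transportCost p D₂ D₃ M} :=
    le_csInf (hne _ _) fun c₂ hc₂ => by
      have := h2 c₂ hc₂; linarith
  linarith
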